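/- (Quantum realisation underlying the result that every contextuality scenario with three preparations is trivial.) Let Y, K ≥ 1, let q ∈ [0,1], and let p : Fin 3 × Fin Y × Fin K → ℝ satisfy p(k|x,y) ≥ 0, Σ_{k} p(k|x,y) = 1 for all x, y, and the preparation-equivalence constraint p(k|2,y) = q·p(k|0,y) + (1−q)·p(k|1,y) for all k, y. On ℂ² define ρ₀ = E₀₀, ρ₁ = E₁₁, ρ₂ = q·ρ₀ + (1−q)·ρ₁, and M^y_k = p(k|0,y)·E₀₀ + p(k|1,y)·E₁₁. Then: (i) ρ₀, ρ₁, ρ₂ are density matrices and ρ₂ = q·ρ₀ + (1−q)·ρ₁; (ii) for each y, {M^y_k}_k is a POVM (0 ≤ M^y_k ≤ I and Σ_k M^y_k = I); (iii) tr(ρ_x M^y_k) = p(k|x,y) for all x ∈ Fin 3, y, k; and (iv) any equality Σ_{k,y} β(k,y) p(k|x,y) = Σ_{k,y} β'(k,y) p(k|x,y) holding for all x ∈ Fin 3 implies the operator equality Σ_{k,y} β(k,y) M^y_k = Σ_{k,y} β'(k,y) M^y_k. -/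

import Mathlib

open Matrix ComplexOrder

/-- The three states `ρ₀ = E₀₀`, `ρ₁ = E₁₁`, `ρ₂ = q•ρ₀ + (1−q)•ρ₁` on `ℂ²`. -/
noncomputable def rhoTriple (q : ℝ) : Fin 3 → Matrix (Fin 2) (Fin 2) ℂ :=
  ![Matrix.single 0 0 (1 : ℂ), Matrix.single 1 1 (1 : ℂ),
    (q : ℂ) • Matrix.single 0 0 (1 : ℂ) +
      ((1 - q : ℝ) : ℂ) • Matrix.single 1 1 (1 : ℂ)]

/-- The diagonal measurement operators `M^y_k = p(k|0,y)•E₀₀ + p(k|1,y)•E₁₁` on `ℂ²`. -/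
noncomputable def measDiag {Y K : ℕ} (p : Fin 3 × Fin Y × Fin K → ℝ) (y : Fin Y) (k : Fin K) :
    Matrix (Fin 2) (Fin 2) ℂ :=
  (p (0, y, k) : ℂ) • Matrix.single 0 0 (1 : ℂ) +
    (p (1, y, k) : ℂ) • Matrix.single 1 1 (1 : ℂ)

lemma two_diag (a b : ℂ) :
    a • Matrix.single 0 0 (1 : ℂ) + b • Matrix.single 1 1 (1 : ℂ)
      = Matrix.diagonal ![a, b] := by
  ext i j
  fin_cases i <;> fin_cases j <;>
    simp [Matrix.single, Matrix.diagonal]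

lemma psd_diag (a b : ℝ) (ha : 0 ≤ a) (hb : 0 ≤ b) :
    (Matrix.diagonal ![(a : ℂ), (b : ℂ)] : Matrix (Fin 2) (Fin 2) ℂ).PosSemidef := by
  refine Matrix.posSemidef_diagonal_iff.mpr fun i => ?_
  fin_cases i <;> simpa using by exact_mod_cast ‹_›

/-- Quantum realisation on `ℂ²` of any behaviour on three preparations satisfying the
preparation equivalence `P₂ ≃ q P₀ + (1−q) P₁`: the states `ρ₀ = E₀₀`, `ρ₁ = E₁₁`,
`ρ₂ = q•ρ₀ + (1−q)•ρ₁` and diagonal POVMs `M^y_k = p(k|0,y)•E₀₀ + p(k|1,y)•E₁₁` reproduce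
the behaviour, satisfy the state equivalence exactly, and inherit every measurement
operational equivalence holding at the level of the behaviour. -/
theorem three_preparation_scenarios_trivial
    (Y K : ℕ) (hY : 1 ≤ Y) (hK : 1 ≤ K) (q : ℝ) (hq0 : 0 ≤ q) (hq1 : q ≤ 1)
    (p : Fin 3 × Fin Y × Fin K → ℝ)
    (hpos : ∀ x y k, 0 ≤ p (x, y, k))
    (hnorm : ∀ x y, ∑ k, p (x, y, k) = 1)
    (hequiv : ∀ y k, p (2, y, k) = q * p (0, y, k) + (1 - q) * p (1, y, k)) :
    (∀ x : Fin 3, (rhoTriple q x).PosSemidef ∧ (rhoTriple q x).trace = 1) ∧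
    (rhoTriple q 2 = (q : ℂ) • rhoTriple q 0 + ((1 - q : ℝ) : ℂ) • rhoTriple q 1) ∧
    (∀ y k, (measDiag p y k).PosSemidef) ∧
    (∀ y k, ((1 : Matrix (Fin 2) (Fin 2) ℂ) - measDiag p y k).PosSemidef) ∧
    (∀ y, ∑ k, measDiag p y k = 1) ∧
    (∀ x y k, (rhoTriple q x * measDiag p y k).trace = (p (x, y, k) : ℂ)) ∧
    (∀ β β' : Fin K × Fin Y → ℝ,
      (∀ x : Fin 3, ∑ k, ∑ y, β (k, y) * p (x, y, k) = ∑ k, ∑ y, β' (k, y) * p (x, y, k)) →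
      ∑ k, ∑ y, (β (k, y) : ℂ) • measDiag p y k
        = ∑ k, ∑ y, (β' (k, y) : ℂ) • measDiag p y k) := by
  have hle1 : ∀ x y k, p (x, y, k) ≤ 1 := by
    intro x y k
    calc p (x, y, k) ≤ ∑ k', p (x, y, k') :=
          Finset.single_le_sum (fun k' _ => hpos x y k') (Finset.mem_univ k)
      _ = 1 := hnorm x y
  have hM : ∀ y k, measDiag p y k
      = Matrix.diagonal ![(p (0, y, k) : ℂ), (p (1, y, k) : ℂ)] := by
    intro y k; exact two_diag _ _
  have hr0 : rhoTriple q 0 = Matrix.diagonal ![(1 : ℂ), 0] := by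
    have := two_diag 1 0; simpa [rhoTriple] using this
  have hr1 : rhoTriple q 1 = Matrix.diagonal ![(0 : ℂ), 1] := by
    have := two_diag 0 1; simpa [rhoTriple] using this
  have hr2 : rhoTriple q 2 = Matrix.diagonal ![(q : ℂ), ((1 - q : ℝ) : ℂ)] := by
    have := two_diag (q : ℂ) ((1 - q : ℝ) : ℂ); simpa [rhoTriple] using this
  refine ⟨?_, ?_, ?_, ?_, ?_, ?_, ?_⟩
  · intro x
    fin_cases x
    · show (rhoTriple q 0).PosSemidef ∧ (rhoTriple q 0).trace = 1
      refine ⟨?_, ?_⟩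
      · rw [show rhoTriple q 0 = Matrix.diagonal ![((1:ℝ) : ℂ), ((0:ℝ) : ℂ)] by
            simpa using hr0]
        exact psd_diag 1 0 zero_le_one le_rfl
      · rw [hr0, Matrix.trace_diagonal]; simp [Fin.sum_univ_two]
    · show (rhoTriple q 1).PosSemidef ∧ (rhoTriple q 1).trace = 1
      refine ⟨?_, ?_⟩
      · rw [show rhoTriple q 1 = Matrix.diagonal ![((0:ℝ) : ℂ), ((1:ℝ) : ℂ)] by
            simpa using hr1]
        exact psd_diag 0 1 le_rfl zero_le_one
      · rw [hr1, Matrix.trace_diagonal]; simp [Fin.sum_univ_two]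
    · show (rhoTriple q 2).PosSemidef ∧ (rhoTriple q 2).trace = 1
      refine ⟨?_, ?_⟩
      · rw [hr2]; exact psd_diag q (1 - q) hq0 (by linarith)
      · rw [hr2, Matrix.trace_diagonal]
        simp [Fin.sum_univ_two]
  · rw [hr0, hr1, hr2]
    ext i j
    fin_cases i <;> fin_cases j <;> simp [Matrix.diagonal]
  · intro y k
    rw [hM]; exact psd_diag _ _ (hpos 0 y k) (hpos 1 y k)
  · intro y k
    have : (1 : Matrix (Fin 2) (Fin 2) ℂ) - measDiag p y k
        = Matrix.diagonal ![((1 - p (0, y, k) : ℝ) : ℂ), ((1 - p (1, y, k) : ℝ) : ℂ)] := by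
      rw [hM]
      ext i j
      fin_cases i <;> fin_cases j <;> simp [Matrix.diagonal, Matrix.one_apply] <;> push_cast <;> ring
    rw [this]
    exact psd_diag _ _ (by linarith [hle1 0 y k]) (by linarith [hle1 1 y k])
  · intro y
    ext i j
    fin_cases i <;> fin_cases j <;>
      simp [measDiag, Matrix.sum_apply, Matrix.single, Matrix.one_apply] <;>
      · rw [← Complex.ofReal_sum]; exact_mod_cast hnorm _ y
  · intro x y k
    fin_cases x
    · show (rhoTriple q 0 * measDiag p y k).trace = (p (0, y, k) : ℂ)
      rw [hr0, hM, Matrix.diagonal_mul_diagonal, Matrix.trace_diagonal]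
      simp [Fin.sum_univ_two]
    · show (rhoTriple q 1 * measDiag p y k).trace = (p (1, y, k) : ℂ)
      rw [hr1, hM, Matrix.diagonal_mul_diagonal, Matrix.trace_diagonal]
      simp [Fin.sum_univ_two]
    · show (rhoTriple q 2 * measDiag p y k).trace = (p (2, y, k) : ℂ)
      rw [hr2, hM, Matrix.diagonal_mul_diagonal, Matrix.trace_diagonal]
      have := hequiv y k
      simp only [Fin.sum_univ_two]
      simp only [Matrix.cons_val_zero, Matrix.cons_val_one, Matrix.head_cons]
      rw [show ((2 : Fin 3), y, k) = ((2 : Fin 3), y, k) from rfl]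
      push_cast [this]; ring
  · intro β β' hβ
    ext i j
    fin_cases i <;> fin_cases j <;>
      simp [measDiag, Matrix.sum_apply, Matrix.single] <;>
      first
        | exact_mod_cast hβ 0
        | exact_mod_cast hβ 1
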